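/- Let q(m,n) = a m² + b m n + c n² be an integral binary quadratic form with a ≠ 0 and discriminant Δ = b² − 4ac = δ² for some positive integer δ. Then there exist integers a₁, a₂, c₁, c₂ with a = a₁·a₂, c = c₁·c₂, b = a₁c₁ + a₂c₂, and δ = a₂c₂ − a₁c₁, so that a m² + b m n + c n² = (a₂ m + c₁ n)·(a₁ m + c₂ n) for all integers m, n. -/

import Mathlib

/-- Factorization of an integral binary quadratic form of positive square
discriminant into two integral linear forms. -/
theorem stmt_10 (a b c δ : ℤ) (ha : a ≠ 0) (hδ : 0 < δ)
    (hΔ : b ^ 2 - 4 * a * c = δ ^ 2) :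
    ∃ a₁ a₂ c₁ c₂ : ℤ, a = a₁ * a₂ ∧ c = c₁ * c₂ ∧
      b = a₁ * c₁ + a₂ * c₂ ∧ δ = a₂ * c₂ - a₁ * c₁ ∧
      ∀ m n : ℤ, a * m ^ 2 + b * m * n + c * n ^ 2 =
        (a₂ * m + c₁ * n) * (a₁ * m + c₂ * n) := by
  -- b and δ have the same parity
  have hpar : (2 : ℤ) ∣ b - δ := by
    rcases Int.even_or_odd (b - δ) with h | h
    · exact h.two_dvd
    · exfalso
      have h2 : Odd (b + δ) := by
        have : b + δ = (b - δ) + 2 * δ := by ring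
        rw [this]
        exact h.add_even (even_two_mul δ)
      have h3 : Odd ((b - δ) * (b + δ)) := h.mul h2
      have h4 : (b - δ) * (b + δ) = 4 * (a * c) := by linarith [hΔ]
      rw [h4] at h3
      rcases h3 with ⟨k, hk⟩
      omega
  obtain ⟨v, hv⟩ := hpar
  set u := v + δ with hu
  have huv : u * v = a * c := by
    have h4 : (4 : ℤ) * (u * v) = 4 * (a * c) := by
      have : b = 2 * v + δ := by omega
      subst this
      ring_nf
      ring_nf at hΔ
      linarith [hΔ]
    linarith
  set g : ℤ := (Int.gcd a v : ℤ) with hg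
  have hgpos : 0 < g := by
    have : Int.gcd a v ≠ 0 := fun h => ha (Int.gcd_eq_zero_iff.mp h).1
    positivity
  have hgne : g ≠ 0 := hgpos.ne'
  have hga : g ∣ a := Int.gcd_dvd_left a v
  have hgv : g ∣ v := Int.gcd_dvd_right a v
  set a₂ : ℤ := a / g with ha₂
  set c₁ : ℤ := v / g with hc₁
  have haeq : a = g * a₂ := (Int.ediv_mul_cancel hga).symm.trans (mul_comm _ _)
  have hveq : v = g * c₁ := (Int.ediv_mul_cancel hgv).symm.trans (mul_comm _ _)
  have ha₂ne : a₂ ≠ 0 := by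
    intro h; apply ha; rw [haeq, h, mul_zero]
  have hcop : IsCoprime a₂ c₁ := by
    rw [Int.isCoprime_iff_gcd_eq_one]
    exact Int.gcd_div_gcd_div_gcd (Nat.pos_of_ne_zero fun h => ha (Int.gcd_eq_zero_iff.mp h).1)
  have huv' : u * c₁ = a₂ * c := by
    have : g * (u * c₁) = g * (a₂ * c) := by
      calc g * (u * c₁) = u * (g * c₁) := by ring
        _ = u * v := by rw [hveq]
        _ = a * c := huv
        _ = g * (a₂ * c) := by rw [haeq]; ring
    exact mul_left_cancel₀ hgne this
  have hdvd : a₂ ∣ u := by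
    have : a₂ ∣ u * c₁ := ⟨c, huv'⟩
    exact (IsCoprime.dvd_of_dvd_mul_right hcop this)
  set c₂ : ℤ := u / a₂ with hc₂
  have hueq : u = a₂ * c₂ := (Int.ediv_mul_cancel hdvd).symm.trans (mul_comm _ _)
  have hceq : c = c₁ * c₂ := by
    have : a₂ * c = a₂ * (c₁ * c₂) := by
      calc a₂ * c = u * c₁ := huv'.symm
        _ = (a₂ * c₂) * c₁ := by rw [hueq]
        _ = a₂ * (c₁ * c₂) := by ring
    exact mul_left_cancel₀ ha₂ne this
  refine ⟨g, a₂, c₁, c₂, haeq, hceq, ?_, ?_, ?_⟩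
  · -- b = g * c₁ + a₂ * c₂ = v + u
    have : b = v + u := by omega
    rw [this, hveq, hueq]
  · have : δ = u - v := by omega
    rw [this, hveq, hueq]
  · intro m n
    have hb : b = g * c₁ + a₂ * c₂ := by
      have : b = v + u := by omega
      rw [this, hveq, hueq]
    linear_combination m ^ 2 * haeq + m * n * hb + n ^ 2 * hceq
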